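/- Let π be an ordered matching between multisets U and V of linear forms by an ordered form-ideal I = {v_1,...,v_i}. If U and V are similar multisets, then M(V) = sc(π) · M(U), where M(·) denotes the product of the forms in the multiset. Consequently all ordered matchings between a fixed pair of similar multisets have the same scaling factor. -/

import Mathlib

open MvPolynomial

noncomputable def toPoly {F : Type*} [Field F] {n : ℕ} (v : Fin n → F) :
    MvPolynomial (Fin n) F := ∑ i, MvPolynomial.C (v i) * MvPolynomial.X i

def spUpTo {F : Type*} [Field F] {n i : ℕ} (v : Fin i → (Fin n → F)) (j : ℕ) :
    Submodule F (Fin n → F) :=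
  Submodule.span F (v '' {t | (t : ℕ) < j})

section Stmt8Aux

variable {F : Type*} [Field F] {n : ℕ} {ι : Type*} [Fintype ι]

lemma toPoly_smul (a : F) (u : Fin n → F) :
    toPoly (a • u) = MvPolynomial.C a * toPoly u := by
  simp [toPoly, Finset.mul_sum, mul_assoc]

/-- The linear map sending `u` to `∑ k, repr u k • T ^ g k`. -/
noncomputable def phiMap (b : Module.Basis ι F (Fin n → F)) (g : ι → ℕ) :
    (Fin n → F) →ₗ[F] Polynomial F where
  toFun u := ∑ k, Polynomial.C (b.repr u k) * Polynomial.X ^ g k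
  map_add' u w := by
    simp [map_add, add_mul, Finset.sum_add_distrib]
  map_smul' a u := by
    simp [Polynomial.smul_eq_C_mul, Finset.mul_sum, mul_assoc]

lemma phiMap_coeff (b : Module.Basis ι F (Fin n → F)) {g : ι → ℕ} (hg : Function.Injective g)
    (u : Fin n → F) (m : ι) : (phiMap b g u).coeff (g m) = b.repr u m := by
  classical
  simp only [phiMap, LinearMap.coe_mk, AddHom.coe_mk, Polynomial.finset_sum_coeff,
    Polynomial.coeff_C_mul, Polynomial.coeff_X_pow]
  rw [Finset.sum_eq_single m]
  · simp
  · intro k _ hk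
    rw [if_neg fun h => hk (hg h).symm, mul_zero]
  · simp

lemma phiMap_degree_lt (b : Module.Basis ι F (Fin n → F)) {g : ι → ℕ} (hg : Function.Injective g)
    {S : Set ι} {N : ℕ} (hS : ∀ k ∈ S, g k < N) {w : Fin n → F}
    (hw : ↑(b.repr w).support ⊆ S) : (phiMap b g w).degree < N := by
  classical
  rw [Polynomial.degree_lt_iff_coeff_zero]
  intro e he
  simp only [phiMap, LinearMap.coe_mk, AddHom.coe_mk, Polynomial.finset_sum_coeff,
    Polynomial.coeff_C_mul, Polynomial.coeff_X_pow]
  apply Finset.sum_eq_zero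
  intro k _
  rcases eq_or_ne (b.repr w k) 0 with h0 | h0
  · simp [h0]
  · have hk : k ∈ S := hw (Finsupp.mem_support_iff.2 h0)
    have hge : g k < e := (hS k hk).trans_le he
    rw [if_neg (by omega), mul_zero]

lemma phiMap_lead (b : Module.Basis ι F (Fin n → F)) {g : ι → ℕ} (hg : Function.Injective g)
    {S : Set ι} {u w : Fin n → F} {c : F} (hc : c ≠ 0)
    (hu : ¬ (↑(b.repr u).support ⊆ S)) (hw : ↑(b.repr w).support ⊆ S)
    (hlt : ∀ k ∈ S, ∀ m ∉ S, g k < g m) :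
    (phiMap b g (c • u + w)).leadingCoeff = c * (phiMap b g u).leadingCoeff ∧
      phiMap b g u ≠ 0 := by
  classical
  obtain ⟨m, hm, hmS⟩ : ∃ m, m ∈ (b.repr u).support ∧ m ∉ S := by
    by_contra h
    push_neg at h
    exact hu fun k hk => h k hk
  have hcm : (phiMap b g u).coeff (g m) ≠ 0 := by
    rw [phiMap_coeff b hg]
    exact Finsupp.mem_support_iff.1 hm
  have hne : phiMap b g u ≠ 0 := fun h => hcm (by simp [h])
  have hdegu : ((g m : ℕ) : WithBot ℕ) ≤ (phiMap b g u).degree :=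
    Polynomial.le_degree_of_ne_zero hcm
  have hdegw : (phiMap b g w).degree < (g m : ℕ) :=
    phiMap_degree_lt b hg (fun k hk => hlt k hk m hmS) hw
  have hdegCu : (Polynomial.C c * phiMap b g u).degree = (phiMap b g u).degree := by
    rw [Polynomial.degree_C_mul hc]
  have hdlt : (phiMap b g w).degree < (Polynomial.C c * phiMap b g u).degree :=
    hdegCu ▸ lt_of_lt_of_le hdegw hdegu
  have hsplit : phiMap b g (c • u + w) = Polynomial.C c * phiMap b g u + phiMap b g w := by
    rw [map_add, map_smul, Polynomial.smul_eq_C_mul]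
  refine ⟨?_, hne⟩
  rw [hsplit, Polynomial.leadingCoeff_add_of_degree_lt' hdlt, Polynomial.leadingCoeff_mul,
    Polynomial.leadingCoeff_C]

lemma aeval_toPoly (L : (Fin n → F) →ₗ[F] Polynomial F) (u : Fin n → F) :
    MvPolynomial.aeval (fun i => L (Pi.single i 1)) (toPoly u) = L u := by
  classical
  have hu : u = ∑ j : Fin n, u j • (Pi.single j 1 : Fin n → F) := by
    funext x
    simp [Pi.single_apply, Finset.sum_ite_eq']
  conv_rhs => rw [hu]
  rw [map_sum]
  simp [toPoly, Polynomial.algebraMap_eq, Polynomial.smul_eq_C_mul, map_smul]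

end Stmt8Aux

/-- if an ordered matching (with scalars `c`) exists between
similar multisets `U`, `V`, then `M(V) = sc(π) · M(U)`, where `sc(π) = ∏ c t`. -/
theorem stmt8 {F : Type*} [Field F] {n i d : ℕ}
    (v : Fin i → (Fin n → F)) (hv : LinearIndependent F v)
    (U V : Fin d → (Fin n → F))
    (π : Equiv.Perm (Fin d)) (c : Fin d → F)
    (hmatch : ∀ t, c t ≠ 0 ∧ ∃ j ≤ i,
      (V (π t) - c t • U t) ∈ spUpTo v j ∧ U t ∉ spUpTo v j)
    (hsim : ∃ σ : Equiv.Perm (Fin d), ∀ t, ∃ e : F, e ≠ 0 ∧ V (σ t) = e • U t) :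
    (∏ t, toPoly (V t)) = MvPolynomial.C (∏ t, c t) * ∏ t, toPoly (U t) := by
  classical
  obtain ⟨σ, hσ⟩ := hsim
  choose e he hVe using hσ
  -- Step A: similarity gives the product identity with scalar ∏ e
  have hA : (∏ t, toPoly (V t)) = MvPolynomial.C (∏ t, e t) * ∏ t, toPoly (U t) := by
    rw [← Equiv.prod_comp σ (fun t => toPoly (V t))]
    rw [show (∏ t, toPoly (V (σ t))) = ∏ t, (MvPolynomial.C (e t) * toPoly (U t)) from
      Finset.prod_congr rfl fun t _ => by rw [hVe t, toPoly_smul]]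
    rw [Finset.prod_mul_distrib, ← map_prod]
  -- Set up the extended basis and the exponent function
  set b := Module.Basis.sumExtend hv with hb
  have hbl : ∀ k, b (Sum.inl k) = v k := by
    intro k
    simp [hb, Module.Basis.sumExtend, Module.Basis.extend_apply_self, Equiv.Set.sumDiffSubset, Equiv.Set.union,
      Equiv.Set.union', Equiv.Set.sumCompl, Equiv.sumCongr, Sum.map, Equiv.ofInjective]
    rfl
  letI : Fintype (Fin i ⊕ Module.Basis.sumExtendIndex hv) := IsNoetherian.fintypeBasisIndex b
  haveI : Finite (↥(Module.Basis.sumExtendIndex hv)) :=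
    Finite.of_injective (Sum.inr : _ → Fin i ⊕ Module.Basis.sumExtendIndex hv) Sum.inr_injective
  obtain ⟨emb, hemb⟩ := exists_injective_nat (↥(Module.Basis.sumExtendIndex hv))
  set g : (Fin i ⊕ Module.Basis.sumExtendIndex hv) → ℕ :=
    Sum.elim (fun k => (k : ℕ)) (fun s => i + emb s) with hgdef
  have hg : Function.Injective g := by
    rintro (a | a) (x | x) h <;> simp only [hgdef, Sum.elim_inl, Sum.elim_inr] at h
    · exact congrArg Sum.inl (Fin.val_injective h)
    · exact absurd h (by have := a.isLt; omega)
    · exact absurd h (by have := x.isLt; omega)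
    · exact congrArg Sum.inr (hemb (by omega))
  -- the matching data
  have hc : ∀ t, c t ≠ 0 := fun t => (hmatch t).1
  choose j hji hw hU using fun t => (hmatch t).2
  set φ := phiMap b g with hφ
  -- per-index leading coefficient relation
  have hkey : ∀ t, (φ (V (π t))).leadingCoeff = c t * (φ (U t)).leadingCoeff ∧ φ (U t) ≠ 0 := by
    intro t
    set S : Set (Fin i ⊕ Module.Basis.sumExtendIndex hv) := Sum.inl '' {k : Fin i | (k : ℕ) < j t} with hS
    have himg : v '' {k : Fin i | (k : ℕ) < j t} = b '' S := by
      rw [hS, Set.image_image]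
      exact Set.image_congr fun k _ => (hbl k).symm
    have hspan : spUpTo v (j t) = Submodule.span F (b '' S) := by rw [spUpTo, himg]
    have hsupU : ¬ (↑(b.repr (U t)).support ⊆ S) := fun hsub =>
      hU t (by rw [hspan]; exact b.mem_span_image.2 hsub)
    have hsupW : ↑(b.repr (V (π t) - c t • U t)).support ⊆ S :=
      b.repr_support_subset_of_mem_span S (by rw [← hspan]; exact hw t)
    have hlt : ∀ k ∈ S, ∀ m ∉ S, g k < g m := by
      rintro k hk m hm
      obtain ⟨a, ha, rfl⟩ := hk
      rcases m with m | m
      · have hmj : ¬ ((m : ℕ) < j t) := fun h => hm ⟨m, h, rfl⟩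
        simp only [hgdef, Sum.elim_inl]
        have ha' : (a : ℕ) < j t := ha
        have := hji t
        omega
      · simp only [hgdef, Sum.elim_inl, Sum.elim_inr]
        have := hji t
        have := ha
        omega
    have hVt : V (π t) = c t • U t + (V (π t) - c t • U t) := by abel
    rw [hVt]
    exact phiMap_lead b hg (hc t) hsupU hsupW hlt
  -- apply the evaluation to hA
  have hEV : ∀ u : Fin n → F,
      MvPolynomial.aeval (fun k => φ (Pi.single k 1)) (toPoly u) = φ u :=
    aeval_toPoly φ
  have hB : (∏ t, φ (V t)) = Polynomial.C (∏ t, e t) * ∏ t, φ (U t) := by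
    have := congrArg (MvPolynomial.aeval (fun k => φ (Pi.single k (1 : F)))) hA
    simpa [map_prod, map_mul, hEV, Polynomial.algebraMap_eq] using this
  set L := ∏ t, (φ (U t)).leadingCoeff with hL
  have hLne : L ≠ 0 := Finset.prod_ne_zero_iff.2 fun t _ =>
    Polynomial.leadingCoeff_ne_zero.2 (hkey t).2
  have hlhs : (∏ t, φ (V t)).leadingCoeff = (∏ t, c t) * L := by
    rw [← Equiv.prod_comp π (fun t => φ (V t)), Polynomial.leadingCoeff_prod]
    rw [show (∏ t, (φ (V (π t))).leadingCoeff)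
        = ∏ t, (c t * (φ (U t)).leadingCoeff) from
      Finset.prod_congr rfl fun t _ => (hkey t).1]
    rw [Finset.prod_mul_distrib]
  have hrhs : (Polynomial.C (∏ t, e t) * ∏ t, φ (U t)).leadingCoeff = (∏ t, e t) * L := by
    rw [Polynomial.leadingCoeff_mul, Polynomial.leadingCoeff_C, Polynomial.leadingCoeff_prod]
  have hce : (∏ t, c t) = ∏ t, e t := by
    have := congrArg Polynomial.leadingCoeff hB
    rw [hlhs, hrhs] at this
    exact mul_right_cancel₀ hLne this
  rw [hA, hce]
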